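/- The bias E[L_Expo] − L_ideal equals (1/|D|) Σ_{(u,i)} [ γ_{u,i}·(θ'_{u,i}·θ_{u,i} − 1)·δ¹_{u,i} + { θ'_{u,i} − 1 − γ_{u,i}·(θ_{u,i}·θ'_{u,i} − 1) }·δ⁰_{u,i} ]. -/

import Mathlib

open MeasureTheory

/-- Bias of the ExpoMF weighted loss against the ideal loss. -/
theorem expomf_bias
    {Ω : Type*} [MeasurableSpace Ω] (μ : Measure Ω) [IsProbabilityMeasure μ]
    {D : Type*} [Fintype D] [Nonempty D]
    (Y : D → Ω → ℝ) (θ θ' γ δ1 δ0 : D → ℝ)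
    (hθ : ∀ d, θ d ∈ Set.Ioc (0 : ℝ) 1) (hγ : ∀ d, γ d ∈ Set.Ioc (0 : ℝ) 1)
    (hθ' : ∀ d, θ' d ∈ Set.Icc (0 : ℝ) 1)
    (hY01 : ∀ d ω, Y d ω = 0 ∨ Y d ω = 1)
    (hInt : ∀ d, Integrable (Y d) μ)
    (hmean : ∀ d, ∫ ω, Y d ω ∂μ = θ d * γ d) :
    (∫ ω, (1 / (Fintype.card D : ℝ)) *
        ∑ d, θ' d * (Y d ω * δ1 d + (1 - Y d ω) * δ0 d) ∂μ)
      - (1 / (Fintype.card D : ℝ)) *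
          ∑ d, (γ d * δ1 d + (1 - γ d) * δ0 d)
      = (1 / (Fintype.card D : ℝ)) *
          ∑ d, (γ d * (θ' d * θ d - 1) * δ1 d
            + (θ' d - 1 - γ d * (θ d * θ' d - 1)) * δ0 d) := by
  have hi : ∀ d : D, Integrable (fun ω => θ' d * (Y d ω * δ1 d + (1 - Y d ω) * δ0 d)) μ := by
    intro d
    have : (fun ω => θ' d * (Y d ω * δ1 d + (1 - Y d ω) * δ0 d))
        = fun ω => (θ' d * (δ1 d - δ0 d)) * Y d ω + θ' d * δ0 d := by
      funext ω; ring
    rw [this]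
    exact ((hInt d).const_mul _).add (integrable_const _)
  have key : ∀ d : D, ∫ ω, θ' d * (Y d ω * δ1 d + (1 - Y d ω) * δ0 d) ∂μ
      = θ' d * (δ1 d - δ0 d) * (θ d * γ d) + θ' d * δ0 d := by
    intro d
    have h1 : (fun ω => θ' d * (Y d ω * δ1 d + (1 - Y d ω) * δ0 d))
        = fun ω => (θ' d * (δ1 d - δ0 d)) * Y d ω + θ' d * δ0 d := by
      funext ω; ring
    rw [h1, integral_add ((hInt d).const_mul _) (integrable_const _),
      integral_const_mul, hmean, integral_const, probReal_univ]
    simp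
  rw [integral_const_mul, integral_finset_sum _ (fun d _ => hi d)]
  rw [← mul_sub, ← Finset.sum_sub_distrib]
  congr 1
  apply Finset.sum_congr rfl
  intro d _
  rw [key]
  ring
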